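/- For the CHSH game with each party's input independently Bernoulli distributed with parameter p ∈ [0,1], the classical value is c*(w_{CHSH,p}) = 1 − p² if 0 ≤ p ≤ 1/2, and c*(w_{CHSH,p}) = 2p − p² if 1/2 ≤ p ≤ 1. -/
import Mathlib


open scoped BigOperators

namespace TC

/-- A behavior: a conditional probability distribution over joint decisions given
joint observations. -/
def IsBehavior {n : ℕ} {O D : Fin n → Type} [∀ i, Fintype (D i)]
    (p : (∀ i, O i) → (∀ i, D i) → ℝ) : Prop :=
  (∀ o d, 0 ≤ p o d) ∧ ∀ o, ∑ d, p o d = 1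

/-- The behavior of a deterministic strategy `f`. -/
def detBehavior {n : ℕ} {O D : Fin n → Type} [∀ i, DecidableEq (D i)]
    (f : ∀ i, O i → D i) : (∀ i, O i) → (∀ i, D i) → ℝ :=
  fun o d => ∏ i, if d i = f i (o i) then (1 : ℝ) else 0

/-- Expected utility of a behavior `p` with respect to a weighted utility array `w`. -/
def expUtility {n : ℕ} {O D : Fin n → Type} [∀ i, Fintype (O i)] [∀ i, Fintype (D i)]
    (w p : (∀ i, O i) → (∀ i, D i) → ℝ) : ℝ :=
  ∑ o, ∑ d, p o d * w o d

/-- A quantum strategy: a finite dimension for each party, a projective measurement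
(indexed by decisions) for each party and observation, and a shared unit state vector. -/
structure QStrategy {n : ℕ} (O D : Fin n → Type) [∀ i, Fintype (O i)] [∀ i, Fintype (D i)] where
  dim : Fin n → ℕ
  dim_pos : ∀ i, 0 < dim i
  proj : ∀ i, O i → D i → Matrix (Fin (dim i)) (Fin (dim i)) ℂ
  proj_herm : ∀ i o d, (proj i o d).IsHermitian
  proj_idem : ∀ i o d, proj i o d * proj i o d = proj i o d
  proj_orth : ∀ i o d d', d ≠ d' → proj i o d * proj i o d' = 0
  proj_sum : ∀ i o, ∑ d, proj i o d = 1
  state : (∀ i, Fin (dim i)) → ℂ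
  state_norm : ∑ x, Complex.normSq (state x) = 1

/-- The behavior determined by a family of "projectors" (measurement operators, one for each
party, observation and decision) and a shared state:
`p(d|o) = ⟨ψ, (⊗ᵢ Πᵢ^{(dᵢ|oᵢ)}) ψ⟩`. -/
noncomputable def projBehavior {n : ℕ} {O D : Fin n → Type} (dim : Fin n → ℕ)
    (proj : ∀ i, O i → D i → Matrix (Fin (dim i)) (Fin (dim i)) ℂ)
    (ψ : (∀ i, Fin (dim i)) → ℂ) : (∀ i, O i) → (∀ i, D i) → ℝ :=
  fun o d =>
    (∑ x, ∑ y, (starRingEnd ℂ) (ψ x) * (∏ i, proj i (o i) (d i) (x i) (y i)) * ψ y).re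

/-- The quantum behavior of a quantum strategy. -/
noncomputable def QStrategy.behavior {n : ℕ} {O D : Fin n → Type}
    [∀ i, Fintype (O i)] [∀ i, Fintype (D i)] (S : QStrategy O D) :
    (∀ i, O i) → (∀ i, D i) → ℝ :=
  projBehavior S.dim S.proj S.state

/-- The classical value: the maximum expected utility over deterministic strategies. -/
noncomputable def cValue {n : ℕ} {O D : Fin n → Type} [∀ i, Fintype (O i)] [∀ i, Fintype (D i)]
    [∀ i, DecidableEq (D i)] (w : (∀ i, O i) → (∀ i, D i) → ℝ) : ℝ :=
  ⨆ f : ∀ i, O i → D i, expUtility w (detBehavior f)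

/-- The quantum value: the supremum of expected utilities over all quantum strategies
(of all finite dimensions). -/
noncomputable def qValue {n : ℕ} {O D : Fin n → Type} [∀ i, Fintype (O i)] [∀ i, Fintype (D i)]
    (w : (∀ i, O i) → (∀ i, D i) → ℝ) : ℝ :=
  sSup {x : ℝ | ∃ S : QStrategy O D, x = expUtility w S.behavior}

/-- The gap `g(w) = q*(w) − c*(w)`. -/
noncomputable def gap {n : ℕ} {O D : Fin n → Type} [∀ i, Fintype (O i)] [∀ i, Fintype (D i)]
    [∀ i, DecidableEq (D i)] (w : (∀ i, O i) → (∀ i, D i) → ℝ) : ℝ :=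
  qValue w - cValue w

/-- `w` is gapped if its gap is positive. -/
def Gapped {n : ℕ} {O D : Fin n → Type} [∀ i, Fintype (O i)] [∀ i, Fintype (D i)]
    [∀ i, DecidableEq (D i)] (w : (∀ i, O i) → (∀ i, D i) → ℝ) : Prop :=
  0 < gap w

/-- A quantum strategy is degenerate if some party uses a trivial (zero or identity)
measurement operator. -/
def QStrategy.Degenerate {n : ℕ} {O D : Fin n → Type}
    [∀ i, Fintype (O i)] [∀ i, Fintype (D i)] (S : QStrategy O D) : Prop :=
  ∃ i o d, S.proj i o d = 0 ∨ S.proj i o d = 1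

/-- A classical behavior: a convex combination of deterministic behaviors. -/
def IsClassicalBehavior {n : ℕ} {O D : Fin n → Type}
    [∀ i, Fintype (O i)] [∀ i, DecidableEq (O i)] [∀ i, Fintype (D i)] [∀ i, DecidableEq (D i)]
    (p : (∀ i, O i) → (∀ i, D i) → ℝ) : Prop :=
  ∃ μ : (∀ i, O i → D i) → ℝ, (∀ f, 0 ≤ μ f) ∧ ∑ f, μ f = 1 ∧
    ∀ o d, p o d = ∑ f, μ f * detBehavior f o d

/-- The lossy behavior built from a family of measurement operators, a shared state, a fallback
deterministic strategy `f`, and efficiencies `η`: the sum over subsets `T` of parties that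
experience loss, weighted by the loss probabilities, of the behavior of the `T`-semiclassical
strategy (parties in `T` use the trivial projectors implementing `f` locally). -/
noncomputable def lossyProjBehavior {n : ℕ} {O D : Fin n → Type} [∀ i, DecidableEq (D i)]
    (dim : Fin n → ℕ) (proj : ∀ i, O i → D i → Matrix (Fin (dim i)) (Fin (dim i)) ℂ)
    (ψ : (∀ i, Fin (dim i)) → ℂ) (f : ∀ i, O i → D i) (η : Fin n → ℝ) :
    (∀ i, O i) → (∀ i, D i) → ℝ :=
  fun o d => ∑ T : Finset (Fin n),
    ((∏ i ∈ T, (1 - η i)) * ∏ i ∈ Tᶜ, η i) *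
      projBehavior dim
        (fun i oi di =>
          if i ∈ T then (if di = f i oi then (1 : Matrix (Fin (dim i)) (Fin (dim i)) ℂ) else 0)
          else proj i oi di)
        ψ o d

/-- The `{ηᵢ}`-lossy behavior of a pair `(S_q, S_d)` of a quantum strategy and a fallback
deterministic strategy. -/
noncomputable def lossyBehavior {n : ℕ} {O D : Fin n → Type}
    [∀ i, Fintype (O i)] [∀ i, Fintype (D i)] [∀ i, DecidableEq (D i)]
    (S : QStrategy O D) (f : ∀ i, O i → D i) (η : Fin n → ℝ) :
    (∀ i, O i) → (∀ i, D i) → ℝ :=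
  lossyProjBehavior S.dim S.proj S.state f η

/-- The `ν`-noisy behavior of a quantum strategy:
`p_o^d(ν) = tr[(⊗ᵢ Πᵢ^{(dᵢ|oᵢ)}) ((1−ν)|ψ⟩⟨ψ| + ν π)]` with `π` the maximally mixed state. -/
noncomputable def noisyBehavior {n : ℕ} {O D : Fin n → Type}
    [∀ i, Fintype (O i)] [∀ i, Fintype (D i)] (S : QStrategy O D) (ν : ℝ) :
    (∀ i, O i) → (∀ i, D i) → ℝ :=
  fun o d =>
    (∑ x, ∑ y, (∏ i, S.proj i (o i) (d i) (x i) (y i)) *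
      ((1 - ν) * (S.state y * (starRingEnd ℂ) (S.state x)) +
        ((ν : ℂ) / (∏ i, (S.dim i : ℂ))) * (if x = y then 1 else 0))).re

end TC

namespace TC

/-- The CHSH weighted utility array with each party's input independently Bernoulli
distributed with parameter `p`: `w(o;d) = p^{o₁+o₂}(1−p)^{2−o₁−o₂}·χ[(o₁∧o₂) = d₁⊕d₂]`
(observation `true` is drawn with probability `p`). -/
noncomputable def wCHSHp (p : ℝ) : (Fin 2 → Bool) → (Fin 2 → Bool) → ℝ :=
  fun o d => (if o 0 then p else 1 - p) * (if o 1 then p else 1 - p) *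
    (if (o 0 && o 1) = (d 0 != d 1) then 1 else 0)

end TC

namespace TC

lemma detBehavior_eq {n : ℕ} {O D : Fin n → Type} [∀ i, DecidableEq (D i)]
    (f : ∀ i, O i → D i) (o : ∀ i, O i) (d : ∀ i, D i) :
    detBehavior f o d = if d = fun i => f i (o i) then 1 else 0 := by
  by_cases h : d = fun i => f i (o i)
  · simp [detBehavior, funext_iff.mp h, h]
  · rw [funext_iff] at h; push_neg at h
    obtain ⟨i, hi⟩ := h
    simp only [detBehavior]
    rw [Finset.prod_eq_zero (Finset.mem_univ i) (by simp [hi])]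
    rw [if_neg]
    rw [funext_iff]; push_neg; exact ⟨i, hi⟩

lemma expUtility_det {n : ℕ} {O D : Fin n → Type} [∀ i, Fintype (O i)] [∀ i, Fintype (D i)]
    [∀ i, DecidableEq (D i)] (w : (∀ i, O i) → (∀ i, D i) → ℝ) (f : ∀ i, O i → D i) :
    expUtility w (detBehavior f) = ∑ o, w o (fun i => f i (o i)) := by
  unfold expUtility
  refine Finset.sum_congr rfl fun o _ => ?_
  rw [show (∑ d, detBehavior f o d * w o d)
      = ∑ d, (if d = (fun i => f i (o i)) then w o d else 0) from
    Finset.sum_congr rfl fun d _ => by rw [detBehavior_eq]; split <;> simp]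
  simp [Finset.sum_ite_eq']

lemma key (p : ℝ) (f : ∀ i : Fin 2, Bool → Bool) :
    expUtility (wCHSHp p) (detBehavior f) =
      (1-p)*(1-p) * (if (false : Bool) = (f 0 false != f 1 false) then 1 else 0)
    + (1-p)*p * (if (false : Bool) = (f 0 false != f 1 true) then 1 else 0)
    + p*(1-p) * (if (false : Bool) = (f 0 true != f 1 false) then 1 else 0)
    + p*p * (if (true : Bool) = (f 0 true != f 1 true) then 1 else 0) := by
  rw [expUtility_det]
  rw [← Equiv.sum_comp (piFinTwoEquiv (fun _ => Bool)).symm]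
  rw [Fintype.sum_prod_type]
  simp [piFinTwoEquiv, wCHSHp, Fin.sum_univ_two]
  ring

end TC

open TC in
/-- the classical value of the CHSH game with independent Bernoulli(p) inputs is
`1 − p²` for `0 ≤ p ≤ 1/2` and `2p − p²` for `1/2 ≤ p ≤ 1`. -/
theorem cValue_wCHSHp (p : ℝ) (hp0 : 0 ≤ p) (hp1 : p ≤ 1) :
    (p ≤ 1/2 →
      cValue (O := fun _ : Fin 2 => Bool) (D := fun _ : Fin 2 => Bool) (wCHSHp p)
        = 1 - p ^ 2) ∧
    (1/2 ≤ p →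
      cValue (O := fun _ : Fin 2 => Bool) (D := fun _ : Fin 2 => Bool) (wCHSHp p)
        = 2 * p - p ^ 2) := by
  have hbdd : BddAbove (Set.range fun f : ∀ _ : Fin 2, Bool → Bool =>
      expUtility (wCHSHp p) (detBehavior f)) := Set.Finite.bddAbove (Set.finite_range _)
  unfold cValue
  constructor
  · intro hp
    apply le_antisymm
    · apply ciSup_le; intro f
      rw [key]
      cases h1 : f 0 false <;> cases h2 : f 0 true <;> cases h3 : f 1 false <;>
        cases h4 : f 1 true <;> simp <;> nlinarith
    · have h := le_ciSup hbdd (fun _ _ => false)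
      rw [key] at h
      simp at h
      nlinarith [h]
  · intro hp
    apply le_antisymm
    · apply ciSup_le; intro f
      rw [key]
      cases h1 : f 0 false <;> cases h2 : f 0 true <;> cases h3 : f 1 false <;>
        cases h4 : f 1 true <;> simp <;> nlinarith
    · have h := le_ciSup hbdd ![fun b => b, fun b => !b]
      rw [key] at h
      simp [Matrix.cons_val_zero, Matrix.cons_val_one] at h
      nlinarith [h]
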